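/- arXiv:1011.3251 — 2 statements merged into one kernel-verified Lean document; each statement's English description precedes it below -/
import Mathlib

section
/- Let f : ℝ² → ℝ be C² and λ : ℝ² → ℝ be C¹, write {F, G} = ∂_x F · ∂_y G − ∂_y F · ∂_x G for the Jacobian bracket, and let v = (−λ ∂_y f, λ ∂_x f). Then every solution (x(t), y(t)) of the first-order system (ẋ, ẏ) = v(x, y) satisfies: (i) f(x(t), y(t)) is constant (the orbit lies on a level curve f = c); (ii) the second-order Dainelli equations ẍ = −λ² {f, ∂_y f} − λ {f, λ} ∂_y f and ÿ = λ² {f, ∂_x f} + λ {f, λ} ∂_x f, all functions being evaluated at (x(t), y(t)); and (iii) equivalently, (ẍ, ÿ) = ∇(½‖v‖²) − λ ( ∂_x(λ ∂_x f) + ∂_y(λ ∂_y f) ) ∇f evaluated at (x(t), y(t)). -/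
open Real Set

noncomputable section

/-- Partial derivative in the `k`-th coordinate direction on ℝ². -/
def pd (k : Fin 2) (f : (Fin 2 → ℝ) → ℝ) (x : Fin 2 → ℝ) : ℝ :=
  fderiv ℝ f x (Pi.single k 1)

/-- Gradient on ℝ². -/
def grad (f : (Fin 2 → ℝ) → ℝ) (x : Fin 2 → ℝ) : Fin 2 → ℝ := fun k => pd k f x

/-- Squared Euclidean norm on ℝ². -/
def nsq (a : Fin 2 → ℝ) : ℝ := ∑ i, a i ^ 2

/-- Jacobian bracket `{F, G} = ∂ₓF ∂ᵧG − ∂ᵧF ∂ₓG`. -/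
def br (F g : (Fin 2 → ℝ) → ℝ) (x : Fin 2 → ℝ) : ℝ :=
  pd 0 F x * pd 1 g x - pd 1 F x * pd 0 g x

/-- Any continuous linear functional on ℝ² is determined by its values on the basis. -/
lemma apply2 (L : (Fin 2 → ℝ) →L[ℝ] ℝ) (w : Fin 2 → ℝ) :
    L w = w 0 * L (Pi.single 0 1) + w 1 * L (Pi.single 1 1) := by
  have hw : w = w 0 • (Pi.single 0 1 : Fin 2 → ℝ) + w 1 • (Pi.single 1 1 : Fin 2 → ℝ) := by
    funext i; fin_cases i <;> simp
  conv_lhs => rw [hw]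
  rw [map_add, map_smul, map_smul, smul_eq_mul, smul_eq_mul]

lemma pd_neg (a : (Fin 2 → ℝ) → ℝ) (X : Fin 2 → ℝ) (k : Fin 2) :
    pd k (fun p => -(a p)) X = -(pd k a X) := by
  unfold pd; rw [fderiv_fun_neg]; simp

lemma pd_mul {a b : (Fin 2 → ℝ) → ℝ} {X : Fin 2 → ℝ}
    (ha : DifferentiableAt ℝ a X) (hb : DifferentiableAt ℝ b X) (k : Fin 2) :
    pd k (fun p => a p * b p) X = pd k a X * b X + a X * pd k b X := by
  unfold pd
  rw [fderiv_fun_mul ha hb]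
  simp only [ContinuousLinearMap.add_apply, ContinuousLinearMap.smul_apply, smul_eq_mul]
  ring

lemma pd_add {a b : (Fin 2 → ℝ) → ℝ} {X : Fin 2 → ℝ}
    (ha : DifferentiableAt ℝ a X) (hb : DifferentiableAt ℝ b X) (k : Fin 2) :
    pd k (fun p => a p + b p) X = pd k a X + pd k b X := by
  unfold pd
  rw [fderiv_fun_add ha hb]
  simp

lemma pd_const_mul {a : (Fin 2 → ℝ) → ℝ} {X : Fin 2 → ℝ} (c : ℝ)
    (ha : DifferentiableAt ℝ a X) (k : Fin 2) :
    pd k (fun p => c * a p) X = c * pd k a X := by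
  unfold pd
  rw [fderiv_const_mul ha]
  simp

/-- Chain rule for a scalar field along a curve, in `pd` form. -/
lemma pd_hasDerivAt {g : (Fin 2 → ℝ) → ℝ} {x : ℝ → Fin 2 → ℝ} {V : Fin 2 → ℝ} {t : ℝ}
    (hg : DifferentiableAt ℝ g (x t)) (hx : HasDerivAt x V t) :
    HasDerivAt (fun u => g (x u)) (pd 0 g (x t) * V 0 + pd 1 g (x t) * V 1) t := by
  have h := hg.hasFDerivAt.comp_hasDerivAt t hx
  refine h.congr_deriv ?_
  rw [apply2 (fderiv ℝ g (x t)) V]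
  simp only [pd]
  ring

/-- Second partials in terms of the second Fréchet derivative. -/
lemma pd_pd {f : (Fin 2 → ℝ) → ℝ} (hf : ContDiff ℝ 2 f) (j k : Fin 2) (X : Fin 2 → ℝ) :
    pd k (fun p => pd j f p) X
      = fderiv ℝ (fderiv ℝ f) X (Pi.single k 1) (Pi.single j 1) := by
  have hfdd : DifferentiableAt ℝ (fderiv ℝ f) X :=
    ((hf.fderiv_right (m := 1) (by norm_num)).differentiable one_ne_zero) X
  have hA := (ContinuousLinearMap.apply ℝ ℝ (Pi.single j (1:ℝ))).hasFDerivAt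
    (x := fderiv ℝ f X)
  have h := hA.comp X hfdd.hasFDerivAt
  have h' : HasFDerivAt (fun p => pd j f p)
      ((ContinuousLinearMap.apply ℝ ℝ (Pi.single j (1:ℝ))).comp
        (fderiv ℝ (fderiv ℝ f) X)) X := h
  show fderiv ℝ (fun p => pd j f p) X (Pi.single k 1) = _
  rw [h'.fderiv]
  rfl

/-- Dainelli's theorem (formula (21) and form (D1)): every solution of
`(ẋ,ẏ) = v(x,y)` with `v = (−λ∂ᵧf, λ∂ₓf)` lies on a level curve of `f` and satisfies
the second-order Dainelli equations. -/
theorem dainelli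
    (f lam : (Fin 2 → ℝ) → ℝ) (hf : ContDiff ℝ 2 f) (hlam : ContDiff ℝ 1 lam)
    (v : (Fin 2 → ℝ) → (Fin 2 → ℝ))
    (hv : ∀ p, v p = ![-(lam p * pd 1 f p), lam p * pd 0 f p])
    (t₁ t₂ : ℝ) (x : ℝ → (Fin 2 → ℝ))
    (hx : ∀ t ∈ Ioo t₁ t₂, HasDerivAt x (v (x t)) t) :
    -- (i) the orbit lies on a level curve of f
    (∀ t ∈ Ioo t₁ t₂, ∀ s ∈ Ioo t₁ t₂, f (x t) = f (x s)) ∧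
    (∀ t ∈ Ioo t₁ t₂,
      -- (ii) the Dainelli second-order equations
      (HasDerivAt (fun u => v (x u) 0)
        (-(lam (x t)) ^ 2 * br f (fun p => pd 1 f p) (x t)
          - lam (x t) * br f lam (x t) * pd 1 f (x t)) t ∧
      HasDerivAt (fun u => v (x u) 1)
        ((lam (x t)) ^ 2 * br f (fun p => pd 0 f p) (x t)
          + lam (x t) * br f lam (x t) * pd 0 f (x t)) t) ∧
      -- (iii) the equivalent gradient form
      HasDerivAt (fun u => v (x u))
        (fun k => grad (fun p => (1 / 2) * nsq (v p)) (x t) k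
          - lam (x t) * (pd 0 (fun p => lam p * pd 0 f p) (x t)
            + pd 1 (fun p => lam p * pd 1 f p) (x t)) * pd k f (x t)) t) := by
  have hf1 : Differentiable ℝ f := hf.differentiable two_ne_zero
  have hlamd : Differentiable ℝ lam := hlam.differentiable one_ne_zero
  have hfdd : Differentiable ℝ (fderiv ℝ f) :=
    (hf.fderiv_right (m := 1) (by norm_num)).differentiable one_ne_zero
  have hF : ∀ j : Fin 2, Differentiable ℝ (fun p => pd j f p) := by
    intro j
    exact (ContinuousLinearMap.apply ℝ ℝ (Pi.single j (1:ℝ))).differentiable.comp hfdd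
  -- the two component fields of v
  set G0 : (Fin 2 → ℝ) → ℝ := fun p => -(lam p * pd 1 f p) with hG0def
  set G1 : (Fin 2 → ℝ) → ℝ := fun p => lam p * pd 0 f p with hG1def
  have hG0 : Differentiable ℝ G0 := (hlamd.mul (hF 1)).neg
  have hG1 : Differentiable ℝ G1 := hlamd.mul (hF 0)
  have hv0 : ∀ p, v p 0 = G0 p := fun p => by rw [hv]; rfl
  have hv1 : ∀ p, v p 1 = G1 p := fun p => by rw [hv]; rfl
  have hsym : ∀ X : Fin 2 → ℝ,
      fderiv ℝ (fderiv ℝ f) X (Pi.single 1 1) (Pi.single 0 1)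
        = fderiv ℝ (fderiv ℝ f) X (Pi.single 0 1) (Pi.single 1 1) := fun X =>
    second_derivative_symmetric (fun y => (hf1 y).hasFDerivAt) (hfdd X).hasFDerivAt _ _
  constructor
  · -- part (i)
    have hd0 : ∀ t ∈ Ioo t₁ t₂, HasDerivWithinAt (fun u => f (x u)) 0 (Ioo t₁ t₂) t := by
      intro t ht
      have h := pd_hasDerivAt (hf1 (x t)) (hx t ht)
      have hval : pd 0 f (x t) * v (x t) 0 + pd 1 f (x t) * v (x t) 1 = 0 := by
        rw [hv0, hv1]; simp only [hG0def, hG1def]; ring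
      rw [hval] at h
      exact h.hasDerivWithinAt
    intro t ht s hs
    have := Convex.norm_image_sub_le_of_norm_hasDerivWithin_le (C := 0) hd0
      (fun u _ => by simp) (convex_Ioo t₁ t₂) hs ht
    simp only [zero_mul, norm_le_zero_iff, sub_eq_zero] at this
    exact this
  · intro t ht
    set X := x t with hX
    have hG0X : G0 X = -(lam X * pd 1 f X) := rfl
    have hG1X : G1 X = lam X * pd 0 f X := rfl
    -- abbreviations for second derivatives
    set a := fderiv ℝ (fderiv ℝ f) X (Pi.single 0 1) (Pi.single 0 1) with ha
    set b := fderiv ℝ (fderiv ℝ f) X (Pi.single 0 1) (Pi.single 1 1) with hb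
    set c := fderiv ℝ (fderiv ℝ f) X (Pi.single 1 1) (Pi.single 1 1) with hc
    have hsymX : fderiv ℝ (fderiv ℝ f) X (Pi.single 1 1) (Pi.single 0 1) = b := hsym X
    -- first partials of G0, G1
    have hpdG0 : ∀ k : Fin 2, pd k G0 X
        = -(pd k lam X * pd 1 f X
            + lam X * fderiv ℝ (fderiv ℝ f) X (Pi.single k 1) (Pi.single 1 1)) := by
      intro k
      rw [hG0def, pd_neg, pd_mul (hlamd X) (hF 1 X), pd_pd hf 1 k X]
    have hpdG1 : ∀ k : Fin 2, pd k G1 X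
        = pd k lam X * pd 0 f X
            + lam X * fderiv ℝ (fderiv ℝ f) X (Pi.single k 1) (Pi.single 0 1) := by
      intro k
      rw [hG1def, pd_mul (hlamd X) (hF 0 X), pd_pd hf 0 k X]
    -- the raw derivatives of the components of v along the curve
    have h0 : HasDerivAt (fun u => v (x u) 0)
        (pd 0 G0 X * v X 0 + pd 1 G0 X * v X 1) t := by
      have : (fun u => v (x u) 0) = fun u => G0 (x u) := funext fun u => hv0 (x u)
      rw [this]
      exact pd_hasDerivAt (hG0 X) (hx t ht)
    have h1 : HasDerivAt (fun u => v (x u) 1)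
        (pd 0 G1 X * v X 0 + pd 1 G1 X * v X 1) t := by
      have : (fun u => v (x u) 1) = fun u => G1 (x u) := funext fun u => hv1 (x u)
      rw [this]
      exact pd_hasDerivAt (hG1 X) (hx t ht)
    -- identify the raw values with the Dainelli expressions
    have hval0 : pd 0 G0 X * v X 0 + pd 1 G0 X * v X 1
        = -(lam X) ^ 2 * br f (fun p => pd 1 f p) X - lam X * br f lam X * pd 1 f X := by
      rw [hv0, hv1, hpdG0 0, hpdG0 1, hG0X, hG1X]
      simp only [br, pd_pd hf 1 0 X, pd_pd hf 1 1 X, hsymX]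
      ring
    have hval1 : pd 0 G1 X * v X 0 + pd 1 G1 X * v X 1
        = (lam X) ^ 2 * br f (fun p => pd 0 f p) X + lam X * br f lam X * pd 0 f X := by
      rw [hv0, hv1, hpdG1 0, hpdG1 1, hG0X, hG1X]
      simp only [br, pd_pd hf 0 0 X, pd_pd hf 0 1 X, hsymX]
      ring
    refine ⟨⟨hval0 ▸ h0, hval1 ▸ h1⟩, ?_⟩
    -- part (iii)
    rw [hasDerivAt_pi]
    -- compute the gradient of the kinetic term
    have hnsq : (fun p => (1/2 : ℝ) * nsq (v p))
        = fun p => (1/2 : ℝ) * (G0 p * G0 p + G1 p * G1 p) := by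
      funext p
      rw [hv]
      simp only [nsq, Fin.sum_univ_two, hG0def, hG1def]
      norm_num
      ring
    have hgrad : ∀ k : Fin 2, grad (fun p => (1/2 : ℝ) * nsq (v p)) X k
        = G0 X * pd k G0 X + G1 X * pd k G1 X := by
      intro k
      show pd k (fun p => (1/2 : ℝ) * nsq (v p)) X = _
      rw [hnsq, pd_const_mul (a := fun p => G0 p * G0 p + G1 p * G1 p) _ (((hG0 X).mul (hG0 X)).add ((hG1 X).mul (hG1 X))),
        pd_add (a := fun p => G0 p * G0 p) (b := fun p => G1 p * G1 p) ((hG0 X).mul (hG0 X)) ((hG1 X).mul (hG1 X)),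
        pd_mul (hG0 X) (hG0 X), pd_mul (hG1 X) (hG1 X)]
      ring
    -- the second divergence-type term (the first is `pd 0 G1 X` itself)
    have hdiv1 : pd 1 (fun p => lam p * pd 1 f p) X = pd 1 lam X * pd 1 f X + lam X * c := by
      rw [pd_mul (hlamd X) (hF 1 X), pd_pd hf 1 1 X]
    intro i
    fin_cases i
    · refine h0.congr_deriv ?_
      beta_reduce
      simp only [Fin.zero_eta, Fin.mk_one]
      rw [hgrad 0, hdiv1, hv0, hv1, hpdG0 0, hpdG0 1, hpdG1 0, hG0X, hG1X]
      ring
    · refine h1.congr_deriv ?_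
      beta_reduce
      simp only [Fin.zero_eta, Fin.mk_one]
      rw [hgrad 1, hdiv1, hv0, hv1, hpdG1 0, hpdG1 1, hpdG0 1, hG0X, hG1X]
      ring
end
end

section
/- Let f : ℝ² → ℝ be C² and λ : ℝ² → ℝ be C¹, and let v = (−λ ∂_y f, λ ∂_x f). Suppose there exists a differentiable function h : ℝ → ℝ such that λ(x,y) · ( ∂_x(λ ∂_x f) + ∂_y(λ ∂_y f) )(x,y) = h'(f(x,y)) for all (x,y) ∈ ℝ². Then the Dainelli force field F = ∇(½‖v‖²) − λ ( ∂_x(λ ∂_x f) + ∂_y(λ ∂_y f) ) ∇f is potential: F = ∇U with U = ½‖v‖² − h∘f, and consequently every solution of (ẋ, ẏ) = v(x, y) satisfies (ẍ, ÿ) = ∇U(x(t), y(t)) and moves along a level curve f = c. -/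
open Real Set

noncomputable section

lemma vec_decomp (w : Fin 2 → ℝ) :
    w = w 0 • (Pi.single 0 1 : Fin 2 → ℝ) + w 1 • (Pi.single 1 1 : Fin 2 → ℝ) := by
  funext i; fin_cases i <;> simp [Pi.single_apply]

lemma fderiv_apply_two (F : (Fin 2 → ℝ) → ℝ) (p w : Fin 2 → ℝ) :
    fderiv ℝ F p w = w 0 * pd 0 F p + w 1 * pd 1 F p := by
  calc fderiv ℝ F p w
      = fderiv ℝ F p (w 0 • (Pi.single 0 1 : Fin 2 → ℝ) + w 1 • (Pi.single 1 1 : Fin 2 → ℝ)) := by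
        rw [← vec_decomp]
    _ = w 0 * pd 0 F p + w 1 * pd 1 F p := by
        rw [map_add, map_smul, map_smul]; rfl

lemma contDiff_pd (f : (Fin 2 → ℝ) → ℝ) (hf : ContDiff ℝ 2 f) (k : Fin 2) :
    ContDiff ℝ 1 (pd k f) := by
  have h1 : ContDiff ℝ 1 (fun p => fderiv ℝ f p) := hf.fderiv_right (by norm_num)
  exact h1.clm_apply contDiff_const

/-- Suslov's inverse problem for N = 2: if `λ(∂ₓ(λ∂ₓf) + ∂ᵧ(λ∂ᵧf)) = h'(f)` then the
Dainelli force field is potential, `F = ∇U` with `U = ½‖v‖² − h∘f`, and every solution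
of `(ẋ,ẏ) = v(x,y)` satisfies `(ẍ,ÿ) = ∇U` and moves along a level curve of `f`. -/
theorem dainelli_potential
    (f lam : (Fin 2 → ℝ) → ℝ) (hf : ContDiff ℝ 2 f) (hlam : ContDiff ℝ 1 lam)
    (v : (Fin 2 → ℝ) → (Fin 2 → ℝ))
    (hv : ∀ p, v p = ![-(lam p * pd 1 f p), lam p * pd 0 f p])
    (h : ℝ → ℝ) (hh : Differentiable ℝ h)
    (hcomp : ∀ p, lam p * (pd 0 (fun q => lam q * pd 0 f q) p
      + pd 1 (fun q => lam q * pd 1 f q) p) = deriv h (f p))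
    (U : (Fin 2 → ℝ) → ℝ)
    (hU : ∀ p, U p = (1 / 2) * nsq (v p) - h (f p)) :
    -- the Dainelli force field is the gradient of U
    (∀ p, (fun k => grad (fun q => (1 / 2) * nsq (v q)) p k
        - lam p * (pd 0 (fun q => lam q * pd 0 f q) p
          + pd 1 (fun q => lam q * pd 1 f q) p) * pd k f p) = grad U p) ∧
    -- and every solution of (ẋ,ẏ) = v(x,y) satisfies (ẍ,ÿ) = ∇U and stays on f = c
    (∀ t₁ t₂ : ℝ, ∀ x : ℝ → (Fin 2 → ℝ),
      (∀ t ∈ Ioo t₁ t₂, HasDerivAt x (v (x t)) t) →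
      ∀ t ∈ Ioo t₁ t₂,
        HasDerivAt (fun u => v (x u)) (grad U (x t)) t ∧
        ∀ s ∈ Ioo t₁ t₂, f (x t) = f (x s)) := by
  have hfd : Differentiable ℝ f := hf.differentiable (by norm_num)
  set g0 : (Fin 2 → ℝ) → ℝ := fun q => lam q * pd 0 f q with hg0def
  set g1 : (Fin 2 → ℝ) → ℝ := fun q => lam q * pd 1 f q with hg1def
  have hg0 : ContDiff ℝ 1 g0 := hlam.mul (contDiff_pd f hf 0)
  have hg1 : ContDiff ℝ 1 g1 := hlam.mul (contDiff_pd f hf 1)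
  have hg0d : Differentiable ℝ g0 := hg0.differentiable (by norm_num)
  have hg1d : Differentiable ℝ g1 := hg1.differentiable (by norm_num)
  have hv0 : ∀ p, v p 0 = -(g1 p) := fun p => by rw [hv p]; rfl
  have hv1 : ∀ p, v p 1 = g0 p := fun p => by rw [hv p]; rfl
  set W : (Fin 2 → ℝ) → ℝ := fun q => (1/2) * (g0 q * g0 q + g1 q * g1 q) with hWdef
  have hWeq : (fun q => (1 / 2) * nsq (v q)) = W := by
    funext p
    have : nsq (v p) = v p 0 ^ 2 + v p 1 ^ 2 := Fin.sum_univ_two _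
    rw [this, hv0, hv1, hWdef]; ring
  have hWfd : ∀ p, HasFDerivAt W
      ((1/2 : ℝ) • ((g0 p • fderiv ℝ g0 p + g0 p • fderiv ℝ g0 p)
        + (g1 p • fderiv ℝ g1 p + g1 p • fderiv ℝ g1 p))) p := fun p =>
    ((((hg0d p).hasFDerivAt.mul (hg0d p).hasFDerivAt).add
      ((hg1d p).hasFDerivAt.mul (hg1d p).hasFDerivAt)).const_mul (1/2))
  have hWpd : ∀ p k, pd k W p = g0 p * pd k g0 p + g1 p * pd k g1 p := by
    intro p k
    have := (hWfd p).fderiv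
    rw [pd, this]
    simp only [ContinuousLinearMap.smul_apply, ContinuousLinearMap.add_apply,
      smul_eq_mul]
    show (1/2 : ℝ) * ((g0 p * pd k g0 p + g0 p * pd k g0 p)
      + (g1 p * pd k g1 p + g1 p * pd k g1 p)) = _
    ring
  have hUfd : ∀ p, HasFDerivAt U
      ((1/2 : ℝ) • ((g0 p • fderiv ℝ g0 p + g0 p • fderiv ℝ g0 p)
        + (g1 p • fderiv ℝ g1 p + g1 p • fderiv ℝ g1 p))
        - deriv h (f p) • fderiv ℝ f p) p := by
    intro p
    have hUfun : U = fun q => W q - h (f q) := by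
      funext q; rw [hU q, ← congrFun hWeq q]
    rw [hUfun]
    exact (hWfd p).sub (((hh (f p)).hasDerivAt).comp_hasFDerivAt p (hfd p).hasFDerivAt)
  have hUpd : ∀ p k, pd k U p = pd k W p - deriv h (f p) * pd k f p := by
    intro p k
    rw [pd, (hUfd p).fderiv]
    simp only [ContinuousLinearMap.sub_apply, ContinuousLinearMap.smul_apply,
      ContinuousLinearMap.add_apply, smul_eq_mul]
    rw [hWpd]
    show (1/2 : ℝ) * ((g0 p * pd k g0 p + g0 p * pd k g0 p)
      + (g1 p * pd k g1 p + g1 p * pd k g1 p)) - deriv h (f p) * pd k f p = _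
    ring
  -- value of grad U
  have hgradU : ∀ p k, grad U p k
      = g0 p * pd k g0 p + g1 p * pd k g1 p
        - lam p * (pd 0 g0 p + pd 1 g1 p) * pd k f p := by
    intro p k
    rw [grad, hUpd, hWpd, ← hcomp p]
  constructor
  · intro p
    funext k
    rw [hgradU p k, hWeq]
    simp only [grad]
    rw [hWpd]
  · intro t₁ t₂ x hx t ht
    have hf0 : ∀ s ∈ Ioo t₁ t₂, HasDerivAt (fun u => f (x u)) 0 s := by
      intro s hs
      have H := (hfd (x s)).hasFDerivAt.comp_hasDerivAt s (hx s hs)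
      have hval : fderiv ℝ f (x s) (v (x s)) = 0 := by
        rw [fderiv_apply_two, hv0, hv1, hg0def, hg1def]; ring
      rw [hval] at H
      exact H
    constructor
    · have heq0 : (fun u => v (x u) 0) = fun u => -(g1 (x u)) := funext fun u => hv0 (x u)
      have heq1 : (fun u => v (x u) 1) = fun u => g0 (x u) := funext fun u => hv1 (x u)
      have h0 : HasDerivAt (fun u => v (x u) 0) (grad U (x t) 0) t := by
        have H := ((hg1d (x t)).hasFDerivAt.comp_hasDerivAt t (hx t ht)).neg
        have hval : grad U (x t) 0 = -(fderiv ℝ g1 (x t) (v (x t))) := by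
          rw [hgradU, fderiv_apply_two, hv0, hv1]
          show lam (x t) * pd 0 f (x t) * pd 0 g0 (x t)
            + lam (x t) * pd 1 f (x t) * pd 0 g1 (x t)
            - lam (x t) * (pd 0 g0 (x t) + pd 1 g1 (x t)) * pd 0 f (x t)
            = -(-(lam (x t) * pd 1 f (x t)) * pd 0 g1 (x t)
              + lam (x t) * pd 0 f (x t) * pd 1 g1 (x t))
          ring
        rw [hval, heq0]
        exact H
      have h1 : HasDerivAt (fun u => v (x u) 1) (grad U (x t) 1) t := by
        have H := (hg0d (x t)).hasFDerivAt.comp_hasDerivAt t (hx t ht)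
        have hval : grad U (x t) 1 = fderiv ℝ g0 (x t) (v (x t)) := by
          rw [hgradU, fderiv_apply_two, hv0, hv1]
          show lam (x t) * pd 0 f (x t) * pd 1 g0 (x t)
            + lam (x t) * pd 1 f (x t) * pd 1 g1 (x t)
            - lam (x t) * (pd 0 g0 (x t) + pd 1 g1 (x t)) * pd 1 f (x t)
            = -(lam (x t) * pd 1 f (x t)) * pd 0 g0 (x t)
              + lam (x t) * pd 0 f (x t) * pd 1 g0 (x t)
          ring
        rw [hval, heq1]
        exact H
      rw [hasDerivAt_pi]
      intro i
      fin_cases i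
      · exact h0
      · exact h1
    · intro s hs
      refine (convex_Ioo t₁ t₂).is_const_of_fderivWithin_eq_zero (𝕜 := ℝ)
        (f := fun u => f (x u)) ?_ ?_ ht hs
      · exact fun r hr => (hf0 r hr).differentiableAt.differentiableWithinAt
      · intro r hr
        rw [fderivWithin_of_isOpen isOpen_Ioo hr, (hf0 r hr).hasFDerivAt.fderiv]
        ext
        simp
end
end
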